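/- Suppose C and D partition Ω (C ∩ D = ∅ and C ∪ D = Ω), consistency holds (C ∩ E = C ∩ A and D ∩ E = D ∩ B), and μ(D ∩ Eᶜ) > 0 and μ(C ∩ E) > 0. Then the observational PNS expression of Definition 1 equals the counterfactual PNS: μ[A | D ∩ Eᶜ]·μ(D ∩ Eᶜ) + μ[Bᶜ | C ∩ E]·μ(C ∩ E) = μ(A ∩ Bᶜ). -/
import Mathlib


open MeasureTheory

/-- Under consistency and the partition of the population into `C = {Z = z}`
and `D = {Z = z̄}`, the observational PNS expression of Definition 1 equals the
counterfactual PNS `μ (A ∩ Bᶜ)`. -/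
theorem observational_pns_eq_counterfactual_pns {Ω : Type*} [MeasurableSpace Ω]
    (μ : Measure Ω) [IsProbabilityMeasure μ] (A B C D E : Set Ω)
    (hA : MeasurableSet A) (hB : MeasurableSet B) (hC : MeasurableSet C)
    (hD : MeasurableSet D) (hE : MeasurableSet E)
    (hCD : C ∩ D = ∅) (hCDunion : C ∪ D = Set.univ)
    (hconsC : C ∩ E = C ∩ A) (hconsD : D ∩ E = D ∩ B)
    (hDpos : 0 < μ (D ∩ Eᶜ)) (hCpos : 0 < μ (C ∩ E)) :
    (μ (A ∩ (D ∩ Eᶜ)) / μ (D ∩ Eᶜ)) * μ (D ∩ Eᶜ)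
      + (μ (Bᶜ ∩ (C ∩ E)) / μ (C ∩ E)) * μ (C ∩ E)
      = μ (A ∩ Bᶜ) := by
  rw [ENNReal.div_mul_cancel hDpos.ne' (measure_ne_top μ _),
      ENNReal.div_mul_cancel hCpos.ne' (measure_ne_top μ _)]
  have h1 : A ∩ (D ∩ Eᶜ) = (A ∩ Bᶜ) ∩ D := by
    ext x
    have := Set.ext_iff.mp hconsD x
    simp only [Set.mem_inter_iff, Set.mem_compl_iff] at *
    tauto
  have h2 : Bᶜ ∩ (C ∩ E) = (A ∩ Bᶜ) ∩ C := by
    ext x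
    have := Set.ext_iff.mp hconsC x
    simp only [Set.mem_inter_iff, Set.mem_compl_iff] at *
    tauto
  rw [h1, h2, ← measure_union ?_ (hA.inter hB.compl |>.inter hC)]
  · congr 1
    rw [← Set.inter_union_distrib_left, Set.union_comm, hCDunion, Set.inter_univ]
  · exact Set.disjoint_left.mpr fun x hx hx2 =>
      Set.eq_empty_iff_forall_notMem.mp hCD x ⟨hx2.2, hx.2⟩
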